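/- arXiv:2604.08642 — 2 statements merged into one kernel-verified Lean document; each statement's English description precedes it below -/
import Mathlib

section
/- Let K be a field of characteristic zero and let K = R₀ ⊆ R₁ ⊆ … ⊆ Rₙ be a chain of radical extensions, where for each i the field Rᵢ = R_{i−1}(aᵢ) with aᵢ^{kᵢ} ∈ R_{i−1} for some natural number kᵢ. Then there exists a normalization of this chain: a nested set of normal radical extensions K = E₀ ⊆ K_u = E₁ ⊆ E₂ ⊆ … ⊆ E_{n+1} such that (1) E₁ is the splitting field over K of the polynomial x^N − 1, where N is the least common multiple of the characteristic degrees k₁, …, kₙ; (2) for each i = 1, …, n the inclusion Rᵢ ⊆ E_{i+1} holds; (3) each E_{i+1} is a normal extension of K and is the splitting field over Eᵢ of a polynomial of the form ∏_m (x^{k_i} − ω_m) with all ω_m ∈ Eᵢ. -/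
/-- (Normalization of a chain of radical extensions.)  Let `K` be a field
of characteristic zero and let `K = R₀ ⊆ R₁ ⊆ … ⊆ Rₙ` be a chain of radical extensions
(inside an algebraically closed extension `Ω` of `K`): `Rᵢ = R_{i-1}(aᵢ)` with
`aᵢ^{kᵢ} ∈ R_{i-1}`.  Then there exists a normalization of this chain: a nested set of
normal radical extensions `K = E₀ ⊆ K_u = E₁ ⊆ … ⊆ E_{n+1}` such that
(1) `E₁` is the splitting field over `K` of `x^N - 1`, where `N = lcm(k₁, …, kₙ)`;
(2) `Rᵢ ⊆ E_{i+1}` for `i = 1, …, n`;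
(3) every `Eᵢ` is a normal (finite Galois) extension of `K`, and for `i = 1, …, n` the
field `E_{i+1}` is the splitting field over `Eᵢ` of a polynomial of the form
`∏_m (x^{kᵢ} - ω_m)` with all `ω_m ∈ Eᵢ`. -/
theorem normalization_of_radical_chain
    (K Ω : Type) [Field K] [CharZero K] [Field Ω] [Algebra K Ω] [IsAlgClosed Ω]
    (n : ℕ) (R : ℕ → IntermediateField K Ω) (a : ℕ → Ω) (k : ℕ → ℕ)
    (hR0 : R 0 = ⊥)
    (hk : ∀ i, 1 ≤ i → i ≤ n → 0 < k i)
    (hstep : ∀ i, 1 ≤ i → i ≤ n → R i = R (i - 1) ⊔ IntermediateField.adjoin K {a i})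
    (hrad : ∀ i, 1 ≤ i → i ≤ n → a i ^ k i ∈ R (i - 1)) :
    ∃ E : ℕ → IntermediateField K Ω,
      E 0 = ⊥ ∧
      (∀ i j, i ≤ j → j ≤ n + 1 → E i ≤ E j) ∧
      Polynomial.IsSplittingField K (E 1)
        ((Polynomial.X : Polynomial K) ^ ((Finset.Icc 1 n).lcm k) - 1) ∧
      (∀ i, 1 ≤ i → i ≤ n → R i ≤ E (i + 1)) ∧
      (∀ i, i ≤ n + 1 → IsGalois K (E i)) ∧
      (∀ i, 1 ≤ i → i ≤ n →
        ∃ (s : Finset (E i)) (hle : E i ≤ E (i + 1)),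
          Polynomial.IsSplittingField (E i) (IntermediateField.extendScalars hle)
            (∏ ω ∈ s, ((Polynomial.X : Polynomial (E i)) ^ k i - Polynomial.C ω))) := by
  classical
  open Polynomial IntermediateField in
  set N := (Finset.Icc 1 n).lcm k with hNdef
  -- `N` is positive
  have hN : 0 < N := by
    rcases Nat.eq_zero_or_pos N with h0 | h
    · exfalso
      rw [hNdef] at h0
      obtain ⟨i, hmem, hki⟩ := Finset.lcm_eq_zero_iff.mp h0
      rw [Finset.mem_Icc] at hmem
      exact (hk i hmem.1 hmem.2).ne' hki
    · exact h
  -- finite dimensionality of the `R i`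
  have hFD : ∀ i, i ≤ n → FiniteDimensional K (R i) := by
    intro i
    induction i with
    | zero =>
      intro _
      rw [hR0]
      infer_instance
    | succ j ih =>
      intro hjn
      have hFDj := ih (Nat.le_of_succ_le hjn)
      have h1 : 1 ≤ j + 1 := Nat.succ_le_succ (Nat.zero_le j)
      have hmem : a (j+1) ^ k (j+1) ∈ R j := hrad (j+1) h1 hjn
      have hc : IsIntegral K (a (j+1) ^ k (j+1)) := by
        haveI := hFDj
        have h2 : IsIntegral K (⟨a (j+1) ^ k (j+1), hmem⟩ : R j) := IsIntegral.of_finite K _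
        simpa using h2.algebraMap (B := Ω)
      have hA : IsIntegral K (a (j+1)) := by
        haveI : FiniteDimensional K K⟮a (j+1) ^ k (j+1)⟯ :=
          IntermediateField.adjoin.finiteDimensional hc
        haveI : Algebra.IsIntegral K K⟮a (j+1) ^ k (j+1)⟯ := Algebra.IsIntegral.of_finite _ _
        have hint : IsIntegral K⟮a (j+1) ^ k (j+1)⟯ (a (j+1)) := by
          refine ⟨Polynomial.X ^ k (j+1) -
            Polynomial.C (⟨a (j+1) ^ k (j+1),
              IntermediateField.mem_adjoin_simple_self K _⟩ : K⟮a (j+1) ^ k (j+1)⟯),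
            Polynomial.monic_X_pow_sub_C _ (hk (j+1) h1 hjn).ne', ?_⟩
          simp [Polynomial.eval₂_sub, sub_eq_zero, IntermediateField.algebraMap_apply]
        exact isIntegral_trans _ hint
      have hstep' : R (j+1) = R j ⊔ IntermediateField.adjoin K {a (j+1)} :=
        hstep (j+1) h1 hjn
      rw [hstep']
      haveI := hFDj
      haveI : FiniteDimensional K (IntermediateField.adjoin K {a (j+1)}) :=
        IntermediateField.adjoin.finiteDimensional hA
      exact IntermediateField.finiteDimensional_sup _ _
  -- every element of `R i` is integral over `K`
  have hintmem : ∀ i, i ≤ n → ∀ x ∈ R i, IsIntegral K x := by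
    intro i hin x hx
    haveI := hFD i hin
    simpa using (IsIntegral.of_finite K (⟨x, hx⟩ : R i)).algebraMap (B := Ω)
  have hci : ∀ i, 1 ≤ i → i ≤ n → IsIntegral K (a i ^ k i) :=
    fun i h1 hin => hintmem (i-1) (le_trans (Nat.sub_le i 1) hin) _ (hrad i h1 hin)
  -- the auxiliary polynomials
  set Q : ℕ → Polynomial K :=
    fun i => (minpoly K (a i ^ k i)).comp (Polynomial.X ^ k i) with hQdef
  set G : ℕ → Polynomial K :=
    fun i => (Polynomial.X ^ N - 1) * ∏ j ∈ Finset.Icc 1 (i - 1), Q j with hGdef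
  set E : ℕ → IntermediateField K Ω :=
    fun i => if i = 0 then ⊥ else IntermediateField.adjoin K ((G i).rootSet Ω) with hEdef
  have hE0 : E 0 = ⊥ := by simp [hEdef]
  have hEpos : ∀ i, i ≠ 0 → E i = IntermediateField.adjoin K ((G i).rootSet Ω) := by
    intro i hi; simp [hEdef, hi]
  have hXN : (Polynomial.X ^ N - 1 : Polynomial K) ≠ 0 := by
    have := Polynomial.monic_X_pow_sub_C (1 : K) hN.ne'
    rw [Polynomial.C_1] at this
    exact this.ne_zero
  have hQne : ∀ i, 1 ≤ i → i ≤ n → Q i ≠ 0 := by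
    intro i h1 hin
    have hd : 0 < (Q i).natDegree := by
      rw [hQdef]
      simp only
      rw [Polynomial.natDegree_comp, Polynomial.natDegree_X_pow]
      exact Nat.mul_pos (minpoly.natDegree_pos (hci i h1 hin)) (hk i h1 hin)
    exact Polynomial.ne_zero_of_natDegree_gt hd
  have hGne : ∀ i, i ≤ n + 1 → G i ≠ 0 := by
    intro i hi
    refine mul_ne_zero hXN (Finset.prod_ne_zero_iff.mpr fun j hj => ?_)
    rw [Finset.mem_Icc] at hj
    exact hQne j hj.1 (le_trans hj.2 (by omega))
  -- root sets
  have hsubroot : ∀ p q : Polynomial K, q ≠ 0 → p ∣ q → p.rootSet Ω ⊆ q.rootSet Ω := by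
    rintro p q hq ⟨d, rfl⟩ x hx
    rw [Polynomial.mem_rootSet] at hx ⊢
    exact ⟨hq, by rw [map_mul, hx.2, zero_mul]⟩
  have hGdvd : ∀ i j, i ≤ j → G i ∣ G j := by
    intro i j hij
    exact mul_dvd_mul_left _ (Finset.prod_dvd_prod_of_subset _ _ _
      (Finset.Icc_subset_Icc_right (by omega)))
  have hEmono : ∀ i j, i ≤ j → j ≤ n + 1 → E i ≤ E j := by
    intro i j hij hj
    rcases Nat.eq_zero_or_pos i with rfl | hi
    · rw [hE0]; exact bot_le
    · have hj0 : j ≠ 0 := by omega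
      rw [hEpos i hi.ne', hEpos j hj0]
      exact IntermediateField.adjoin.mono K _ _ (hsubroot _ _ (hGne j hj) (hGdvd i j hij))
  -- Galois
  have hGal : ∀ i, i ≤ n + 1 → IsGalois K (E i) := by
    intro i hi
    rcases Nat.eq_zero_or_pos i with rfl | hi0
    · rw [hE0]; infer_instance
    · rw [hEpos i hi0.ne']
      have hsf : Polynomial.IsSplittingField K
          (IntermediateField.adjoin K ((G i).rootSet Ω)) (G i) :=
        IntermediateField.adjoin_rootSet_isSplittingField (IsAlgClosed.splits _)
      haveI := hsf
      haveI : Normal K (IntermediateField.adjoin K ((G i).rootSet Ω)) :=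
        Normal.of_isSplittingField (G i)
      haveI : FiniteDimensional K (IntermediateField.adjoin K ((G i).rootSet Ω)) :=
        Polynomial.IsSplittingField.finiteDimensional _ (G i)
      constructor
  -- `a i` is a root of `Q i`
  have haQ : ∀ i, 1 ≤ i → i ≤ n → a i ∈ (Q i).rootSet Ω := by
    intro i h1 hin
    rw [Polynomial.mem_rootSet]
    refine ⟨hQne i h1 hin, ?_⟩
    rw [hQdef]
    simp [Polynomial.aeval_comp, minpoly.aeval]
  -- `R i ≤ E (i+1)`
  have hRE : ∀ i, i ≤ n → R i ≤ E (i + 1) := by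
    intro i
    induction i with
    | zero => intro _; rw [hR0]; exact bot_le
    | succ j ih =>
      intro hjn
      have h1 : 1 ≤ j + 1 := Nat.succ_le_succ (Nat.zero_le j)
      have hstep' : R (j+1) = R j ⊔ IntermediateField.adjoin K {a (j+1)} :=
        hstep (j+1) h1 hjn
      rw [hstep']
      refine sup_le (le_trans (ih (Nat.le_of_succ_le hjn))
        (hEmono (j+1) (j+2) (by omega) (by omega))) ?_
      rw [IntermediateField.adjoin_le_iff]
      intro x hx
      rw [Set.mem_singleton_iff] at hx
      subst hx
      have hmem : a (j+1) ∈ (G (j+2)).rootSet Ω :=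
        hsubroot _ _ (hGne (j+2) (by omega))
          ((Finset.dvd_prod_of_mem Q (Finset.mem_Icc.mpr ⟨by omega, by omega⟩ : (j+1) ∈ Finset.Icc 1 (j+2-1))).trans
            (Dvd.intro_left _ rfl)) (haQ (j+1) h1 hjn)
      rw [hEpos (j+2) (by omega)]
      exact IntermediateField.subset_adjoin K _ hmem
  -- condition (1)
  have hG1 : G 1 = Polynomial.X ^ N - 1 := by
    show (Polynomial.X ^ N - 1) * ∏ l ∈ Finset.Icc 1 0, Q l = Polynomial.X ^ N - 1
    rw [Finset.Icc_eq_empty (by omega), Finset.prod_empty, mul_one]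
  have hcond1 : Polynomial.IsSplittingField K (E 1)
      ((Polynomial.X : Polynomial K) ^ N - 1) := by
    rw [hEpos 1 one_ne_zero, ← hG1]
    exact IntermediateField.adjoin_rootSet_isSplittingField (IsAlgClosed.splits _)
  -- condition (3)
  have hcond3 : ∀ i, 1 ≤ i → i ≤ n →
      ∃ (s : Finset (E i)) (hle : E i ≤ E (i + 1)),
        Polynomial.IsSplittingField (E i) (IntermediateField.extendScalars hle)
          (∏ ω ∈ s, ((Polynomial.X : Polynomial (E i)) ^ k i - Polynomial.C ω)) := by
    intro i h1 hin
    obtain ⟨j, rfl⟩ : ∃ j, i = j + 1 := ⟨i - 1, (Nat.succ_pred_eq_of_pos h1).symm⟩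
    have hkpos : 0 < k (j+1) := hk (j+1) h1 hin
    have hle : E (j+1) ≤ E (j+2) := hEmono (j+1) (j+2) (by omega) (by omega)
    haveI : IsGalois K (E (j+1)) := hGal (j+1) (by omega)
    have hcE : a (j+1) ^ k (j+1) ∈ E (j+1) := by
      have hmem : a (j+1) ^ k (j+1) ∈ R j := hrad (j+1) h1 hin
      exact hRE j (by omega) hmem
    set m : Polynomial K := minpoly K (a (j+1) ^ k (j+1)) with hmdef
    have hmne : m ≠ 0 := minpoly.ne_zero (hci (j+1) h1 hin)
    -- `m` splits in `E (j+1)`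
    have hmeq : minpoly K (⟨a (j+1) ^ k (j+1), hcE⟩ : E (j+1)) = m := by
      rw [hmdef, ← minpoly.algebraMap_eq (algebraMap (E (j+1)) Ω).injective
        (⟨a (j+1) ^ k (j+1), hcE⟩ : E (j+1))]
      rfl
    have hsplitm : (m.map (algebraMap K (E (j+1)))).Splits := by
      rw [← hmeq]
      exact Normal.splits inferInstance _
    set s : Finset (E (j+1)) := (m.aroots (E (j+1))).toFinset with hsdef
    have hscoe : (↑s : Set (E (j+1))) = m.rootSet (E (j+1)) := (Polynomial.rootSet_def _ _).symm
    set P : Polynomial (E (j+1)) :=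
      ∏ ω ∈ s, ((Polynomial.X : Polynomial (E (j+1))) ^ k (j+1) - Polynomial.C ω) with hPdef
    have hPmonic : P.Monic :=
      Polynomial.monic_prod_of_monic _ _ fun ω _ => Polynomial.monic_X_pow_sub_C ω hkpos.ne'
    have hPne : P ≠ 0 := hPmonic.ne_zero
    have hevalP : ∀ x : Ω, Polynomial.aeval x P =
        ∏ ω ∈ s, (x ^ k (j+1) - algebraMap (E (j+1)) Ω ω) := by
      intro x
      rw [hPdef, map_prod]
      simp
    have hevalQ : ∀ x : Ω, Polynomial.aeval x (Q (j+1)) =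
        Polynomial.aeval (x ^ k (j+1)) m := by
      intro x
      rw [hQdef]
      simp [Polynomial.aeval_comp, hmdef]
    -- root sets of `P` and `Q (j+1)` in `Ω` agree
    have hrootPQ : P.rootSet Ω = (Q (j+1)).rootSet Ω := by
      ext x
      haveI : Module.IsTorsionFree (E (j+1)) Ω :=
        Module.isTorsionFree_iff_algebraMap_injective.mpr (algebraMap (E (j+1)) Ω).injective
      rw [Polynomial.mem_rootSet, Polynomial.mem_rootSet]
      constructor
      · rintro ⟨-, hx⟩
        refine ⟨hQne (j+1) h1 hin, ?_⟩
        rw [hevalP] at hx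
        obtain ⟨ω, hωs, hω0⟩ := Finset.prod_eq_zero_iff.mp hx
        have hωroot : Polynomial.aeval ω m = 0 := by
          have := Multiset.mem_toFinset.mp hωs
          rw [Polynomial.mem_aroots] at this
          exact this.2
        rw [hevalQ, sub_eq_zero.mp hω0, Polynomial.aeval_algebraMap_apply, hωroot, map_zero]
      · rintro ⟨-, hx⟩
        refine ⟨hPne, ?_⟩
        rw [hevalQ] at hx
        have hxr : x ^ k (j+1) ∈ m.rootSet Ω := Polynomial.mem_rootSet.mpr ⟨hmne, hx⟩
        rw [← Polynomial.Splits.image_rootSet hsplitm (E (j+1)).val] at hxr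
        obtain ⟨ω, hωmem, hωeq⟩ := hxr
        rw [← hscoe] at hωmem
        rw [hevalP]
        refine Finset.prod_eq_zero (Finset.mem_coe.mp hωmem) ?_
        rw [sub_eq_zero]
        exact hωeq.symm
    -- decomposition of `E (j+2)`
    have hGsucc : G (j+2) = G (j+1) * Q (j+1) := by
      show (Polynomial.X ^ N - 1) * ∏ l ∈ Finset.Icc 1 (j+1), Q l =
        ((Polynomial.X ^ N - 1) * ∏ l ∈ Finset.Icc 1 j, Q l) * Q (j+1)
      rw [Finset.prod_Icc_succ_top (by omega : 1 ≤ j + 1), mul_assoc]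
    have hunion : (G (j+2)).rootSet Ω = (G (j+1)).rootSet Ω ∪ (Q (j+1)).rootSet Ω := by
      ext x
      simp only [Polynomial.mem_rootSet, Set.mem_union, hGsucc, map_mul, mul_eq_zero,
        mul_ne_zero (hGne (j+1) (by omega)) (hQne (j+1) h1 hin), hGne (j+1) (by omega),
        hQne (j+1) h1 hin, ne_eq, not_false_eq_true, true_and]
    have hEEQ : E (j+2) = E (j+1) ⊔ IntermediateField.adjoin K (P.rootSet Ω) := by
      rw [hrootPQ, hEpos (j+2) (by omega), hEpos (j+1) (by omega), hunion,
        IntermediateField.adjoin_union]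
    have heq : IntermediateField.adjoin (E (j+1)) (P.rootSet Ω) =
        IntermediateField.extendScalars hle := by
      apply IntermediateField.restrictScalars_injective K
      rw [IntermediateField.extendScalars_restrictScalars,
        IntermediateField.restrictScalars_adjoin_eq_sup, hEEQ]
    exact ⟨s, hle, heq ▸
      IntermediateField.adjoin_rootSet_isSplittingField (IsAlgClosed.splits (P.map (algebraMap (E (j+1)) Ω)))⟩
  exact ⟨E, hE0, hEmono, hcond1, fun i _ hin => hRE i hin, hGal, hcond3⟩
end

section
/- Let K be a field of characteristic zero and let P ∈ K[x] be a polynomial such that the equation P(x) = 0 is solvable by radicals: there exists a chain of radical extensions K = R₀ ⊆ R₁ ⊆ … ⊆ Rₙ (each Rᵢ = R_{i−1}(aᵢ) with aᵢ^{kᵢ} ∈ R_{i−1}) and a field homomorphism from the splitting field E of P over K into Rₙ restricting to the identity on K. Then the Galois group G(E,K) of the splitting field E of P over K is a solvable group. -/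
/-- (Necessary condition for solvability by radicals.)  Let `K` be a
field of characteristic zero and `P ∈ K[x]` a polynomial whose equation `P(x) = 0` is
solvable by radicals: there is a chain of radical extensions
`K = R₀ ⊆ R₁ ⊆ … ⊆ Rₙ` (inside an extension `L` of `K`), where `Rᵢ = R_{i-1}(aᵢ)` with
`aᵢ^{kᵢ} ∈ R_{i-1}`, and a homomorphism `π` from the splitting field `E` of `P` over `K`
into `Rₙ` restricting to the identity on `K`.  Then the Galois group `G(E,K)` of the
splitting field `E` of `P` over `K` is solvable. -/
theorem solvable_galois_group_of_solvable_by_radicals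
    (K E L : Type) [Field K] [CharZero K] [Field E] [Field L]
    [Algebra K E] [Algebra K L]
    (P : Polynomial K) (hE : Polynomial.IsSplittingField K E P)
    (n : ℕ) (R : ℕ → IntermediateField K L) (a : ℕ → L) (k : ℕ → ℕ)
    (hR0 : R 0 = ⊥)
    (hk : ∀ i, 1 ≤ i → i ≤ n → 0 < k i)
    (hstep : ∀ i, 1 ≤ i → i ≤ n → R i = R (i - 1) ⊔ IntermediateField.adjoin K {a i})
    (hrad : ∀ i, 1 ≤ i → i ≤ n → a i ^ k i ∈ R (i - 1))
    (π : E →ₐ[K] L) (hπ : ∀ x : E, π x ∈ R n) :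
    IsSolvable (E ≃ₐ[K] E) := by
  -- Step 1: every element of `R i` (for `i ≤ n`) is solvable by radicals.
  have hRsolv : ∀ i, i ≤ n → R i ≤ solvableByRad K L := by
    intro i
    induction i with
    | zero => intro _; rw [hR0]; exact bot_le
    | succ j ih =>
      intro hjn
      have h1 : 1 ≤ j + 1 := Nat.succ_le_succ (Nat.zero_le _)
      have hprev : R j ≤ solvableByRad K L := ih (Nat.le_of_succ_le hjn)
      rw [hstep (j + 1) h1 hjn, Nat.add_sub_cancel] at *
      apply sup_le hprev
      rw [IntermediateField.adjoin_le_iff]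
      rintro x rfl
      exact solvableByRad.rad_mem
          (hk (j + 1) h1 hjn).ne'
          (hprev (by have := hrad (j + 1) h1 hjn; rwa [Nat.add_sub_cancel] at this))
  -- Step 2: `IsSolvable P.Gal`.
  have hgal : IsSolvable P.Gal := by
    by_cases hP : P = 0
    · rw [hP]; exact gal_zero_isSolvable
    · obtain ⟨u, hu⟩ := (UniqueFactorizationMonoid.factors_prod hP)
      -- P = (factors).prod * u
      have hprodgal : IsSolvable (UniqueFactorizationMonoid.factors P).prod.Gal := by
        apply gal_prod_isSolvable
        intro q hq
        have hq_irred : Irreducible q := UniqueFactorizationMonoid.irreducible_of_factor q hq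
        have hq_dvd : q ∣ P := dvd_trans (Multiset.dvd_prod hq)
          (UniqueFactorizationMonoid.factors_prod hP).dvd
        -- q splits in E, get a root α ∈ E
        have hsplits : Polynomial.Splits (q.map (algebraMap K E)) :=
          Polynomial.Splits.of_dvd hE.splits (Polynomial.map_ne_zero hP) (Polynomial.map_dvd _ hq_dvd)
        have hdeg : q.degree ≠ 0 := by
          rw [Polynomial.degree_eq_natDegree hq_irred.ne_zero]
          exact_mod_cast fun h => hq_irred.natDegree_pos.ne' (by exact_mod_cast h)
        obtain ⟨α, hα⟩ := Polynomial.Splits.exists_eval_eq_zero hsplits (by rwa [Polynomial.degree_map])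
        have hαL : Polynomial.aeval (π α) q = 0 := by
          have : π (Polynomial.aeval α q) = 0 := by
            rw [show Polynomial.aeval α q = 0 from by rwa [Polynomial.eval_map_algebraMap] at hα, map_zero]
          rwa [← Polynomial.aeval_algHom_apply] at this
        exact solvableByRad.isSolvable' (hRsolv n le_rfl (hπ α)) hq_irred hαL
      have : P = (UniqueFactorizationMonoid.factors P).prod * u := hu.symm
      rw [this]
      obtain ⟨c, hc0, hcu⟩ := Polynomial.isUnit_iff.mp u.isUnit
      rw [← hcu]
      exact gal_mul_isSolvable hprodgal (gal_C_isSolvable c)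
  -- Step 3: transfer along `E ≃ₐ[K] P.SplittingField`.
  have e : E ≃ₐ[K] P.SplittingField := Polynomial.IsSplittingField.algEquiv E P
  haveI : Group.IsSolvable (P.SplittingField ≃ₐ[K] P.SplittingField) := hgal
  exact solvable_of_solvable_injective (f := (AlgEquiv.autCongr e).toMonoidHom) (AlgEquiv.autCongr e).injective
end
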